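/- arXiv:2211.06362 — 4 statements merged into one kernel-verified Lean document; each statement's English description precedes it below -/
import Mathlib

section
/- Let n ≥ 1 and let A : ℕ → ℝ → ℝ be a family of functions with A i monotone nondecreasing in ρ for each i, and let c > 0, R > 0, ε : ℕ → ℝ with ε i ≥ 0. Suppose A 0 is the constant function c on (0,R), and for each i < n and all 0 < r1 < r2 < R, ∫_{r1}^{r2} A i (ρ) dρ ≤ A (i+1) (r2) + 2·(ε i)·R. Then for all 0 < r1 < r2 < R, c · (r2 - r1)^n / n! ≤ A n (r2) + (2·(ε 0)·R^n + 2·(ε 1)·R^(n-1) + ⋯ + 2·(ε (n-1))·R). -/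
open MeasureTheory Finset

/-- Iterated-integration induction of Lemma 3.2: from a constant count `A 0 = c`
on `(0, R)` and annulus bounds `∫_{r1}^{r2} A i ≤ A (i+1) r2 + 2 εᵢ R` at every level,
one gets the Euclidean-type lower bound
`c (r2 - r1)^n / n! ≤ A n r2 + Σ_{i<n} 2 εᵢ R^(n-i)`. -/
theorem iterated_annulus_bound
    (n : ℕ) (hn : 1 ≤ n) (A : ℕ → ℝ → ℝ) (c R : ℝ) (ε : ℕ → ℝ)
    (hc : 0 < c) (hR : 0 < R) (hε : ∀ i, 0 ≤ ε i)
    (hmono : ∀ i, MonotoneOn (A i) (Set.Ioo 0 R))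
    (hA0 : ∀ ρ ∈ Set.Ioo (0:ℝ) R, A 0 ρ = c)
    (hstep : ∀ i < n, ∀ r1 r2 : ℝ, 0 < r1 → r1 < r2 → r2 < R →
      ∫ ρ in r1..r2, A i ρ ≤ A (i+1) r2 + 2 * ε i * R) :
    ∀ r1 r2 : ℝ, 0 < r1 → r1 < r2 → r2 < R →
      c * (r2 - r1) ^ n / (Nat.factorial n) ≤
        A n r2 + ∑ i ∈ Finset.range n, 2 * ε i * R ^ (n - i) := by
  suffices H : ∀ i, i ≤ n → ∀ r1 r2 : ℝ, 0 < r1 → r1 < r2 → r2 < R →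
      c * (r2 - r1) ^ i / (Nat.factorial i) ≤
        A i r2 + ∑ j ∈ Finset.range i, 2 * ε j * R ^ (i - j) from H n le_rfl
  intro i
  induction i with
  | zero =>
    intro _ r1 r2 h1 h12 h2R
    simp [hA0 r2 ⟨h1.trans h12, h2R⟩]
  | succ i ih =>
    intro hin r1 r2 h1 h12 h2R
    have hi : i < n := hin
    have ihle := ih hi.le
    set E := ∑ j ∈ Finset.range i, 2 * ε j * R ^ (i - j) with hE
    have hE0 : 0 ≤ E := by
      apply Finset.sum_nonneg
      intro j _
      have := hε j
      positivity
    have key : ∀ ρ ∈ Set.Icc r1 r2,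
        c * (ρ - r1) ^ i / (Nat.factorial i) - E ≤ A i ρ := by
      intro ρ hρ
      have h := ihle (r1 / 2) ρ (by linarith) (by linarith [hρ.1]) (lt_of_le_of_lt hρ.2 h2R)
      have hpow : (ρ - r1) ^ i ≤ (ρ - r1 / 2) ^ i :=
        pow_le_pow_left₀ (by linarith [hρ.1]) (by linarith) i
      have hfac : (0:ℝ) < (Nat.factorial i : ℝ) := by positivity
      have : c * (ρ - r1) ^ i / (Nat.factorial i) ≤ c * (ρ - r1 / 2) ^ i / (Nat.factorial i) := by
        gcongr
      linarith
    have hsub : Set.uIcc r1 r2 ⊆ Set.Ioo 0 R := by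
      rw [Set.uIcc_of_le h12.le]
      intro x hx
      exact ⟨lt_of_lt_of_le h1 hx.1, lt_of_le_of_lt hx.2 h2R⟩
    have hint : IntervalIntegrable (A i) volume r1 r2 :=
      ((hmono i).mono hsub).intervalIntegrable
    have hcont : IntervalIntegrable (fun ρ => c * (ρ - r1) ^ i / (Nat.factorial i) - E)
        volume r1 r2 := by
      apply Continuous.intervalIntegrable
      continuity
    have hmonoInt : ∫ ρ in r1..r2, (c * (ρ - r1) ^ i / (Nat.factorial i) - E) ≤
        ∫ ρ in r1..r2, A i ρ :=
      intervalIntegral.integral_mono_on h12.le hcont hint key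
    have hcalc : ∫ ρ in r1..r2, (c * (ρ - r1) ^ i / (Nat.factorial i) - E) =
        c * (r2 - r1) ^ (i + 1) / (Nat.factorial (i + 1)) - E * (r2 - r1) := by
      have h1' : ∫ ρ in r1..r2, (c * (ρ - r1) ^ i / (Nat.factorial i) - E)
          = (∫ ρ in r1..r2, (c / (Nat.factorial i)) * (ρ - r1) ^ i) - (r2 - r1) * E := by
        rw [intervalIntegral.integral_sub (by apply Continuous.intervalIntegrable; continuity)
          intervalIntegrable_const, intervalIntegral.integral_const, smul_eq_mul]
        congr 1
        apply intervalIntegral.integral_congr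
        intro x _
        ring
      rw [h1', intervalIntegral.integral_const_mul]
      have h2' : ∫ ρ in r1..r2, (ρ - r1) ^ i = ∫ x in (r1 - r1)..(r2 - r1), x ^ i := by
        rw [show (fun ρ : ℝ => (ρ - r1) ^ i) = (fun x : ℝ => x ^ i) ∘ (fun ρ => ρ - r1) from rfl]
        exact intervalIntegral.integral_comp_sub_right (fun x => x ^ i) r1
      rw [h2', sub_self, integral_pow]
      have hfac : (Nat.factorial (i + 1) : ℝ) = (i + 1) * (Nat.factorial i) := by
        push_cast [Nat.factorial_succ]; ring
      have hfi : (Nat.factorial i : ℝ) ≠ 0 := by positivity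
      have hii : ((i : ℝ) + 1) ≠ 0 := by positivity
      rw [hfac, zero_pow (Nat.succ_ne_zero i), sub_zero, div_mul_div_comm,
        mul_comm ((Nat.factorial i : ℝ)) ((i:ℝ)+1)]
      ring
    have hstep' := hstep i hi r1 r2 h1 h12 h2R
    have hsum : ∑ j ∈ Finset.range (i + 1), 2 * ε j * R ^ (i + 1 - j)
        = 2 * ε i * R + R * E := by
      rw [Finset.sum_range_succ, show i + 1 - i = 1 by omega, pow_one, hE, Finset.mul_sum]
      rw [add_comm]
      congr 1
      apply Finset.sum_congr rfl
      intro j hj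
      have hji : j ≤ i := (Finset.mem_range.mp hj).le
      have : i + 1 - j = (i - j) + 1 := by omega
      rw [this, pow_succ]
      ring
    have hER : E * (r2 - r1) ≤ E * R := by
      apply mul_le_mul_of_nonneg_left (by linarith) hE0
    rw [hsum]
    linarith
end

section
/- Let Γ be a group acting on a set X, let F ⊆ Γ be a finite set with 1 ∉ F and F = F⁻¹, and suppose X is partitioned into sets X_1, …, X_m such that X_j ∩ γX_j = ∅ for all j and all γ ∈ F. Let A ⊆ X. Define A_0 = ∅ and A_j = A_{j-1} ∪ ((A ∩ X_j) \ ⋃_{γ ∈ F} γA_{j-1}) for j = 1,…,m, and set E = A_m. Then: (1) E ⊆ A; (2) E ∩ γE = ∅ for all γ ∈ F; (3) E is maximal in the sense that every x ∈ A \ E satisfies x ∈ γE for some γ ∈ F. -/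
open scoped Pointwise

/-- Greedy construction from Section 4: given a partition `X₁, …, X_m` of `X` with
`X_j ∩ γX_j = ∅` for all `γ` in a finite symmetric set `F` of non-identity elements,
and `A ⊆ X`, the greedily built set `E = A_m` (with `A_0 = ∅` and
`A_j = A_{j-1} ∪ ((A ∩ X_j) \ ⋃_{γ ∈ F} γA_{j-1})`) satisfies: `E ⊆ A`;
`E ∩ γE = ∅` for all `γ ∈ F`; and every `x ∈ A \ E` lies in `γE` for some `γ ∈ F`. -/
theorem greedy_disjoint_maximal
    {Γ : Type*} [Group Γ] {X : Type*} [MulAction Γ X]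
    (F : Finset Γ) (h1 : (1 : Γ) ∉ F) (hFsymm : ∀ γ ∈ F, γ⁻¹ ∈ F)
    (m : ℕ) (Xp : ℕ → Set X)
    (hcover : (⋃ j ∈ Finset.Icc 1 m, Xp j) = Set.univ)
    (hdisj : ∀ j ∈ Finset.Icc 1 m, ∀ i ∈ Finset.Icc 1 m, i ≠ j → Disjoint (Xp i) (Xp j))
    (hXγ : ∀ j ∈ Finset.Icc 1 m, ∀ γ ∈ F, Xp j ∩ γ • Xp j = ∅)
    (A : Set X) (B : ℕ → Set X)
    (hB0 : B 0 = ∅)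
    (hBsucc : ∀ j < m, B (j + 1) = B j ∪ ((A ∩ Xp (j + 1)) \ ⋃ γ ∈ F, γ • B j))
    (E : Set X) (hE : E = B m) :
    E ⊆ A ∧ (∀ γ ∈ F, E ∩ γ • E = ∅) ∧
      (∀ x ∈ A \ E, ∃ γ ∈ F, x ∈ γ • E) := by
  subst hE
  -- monotonicity
  have hmono : ∀ i j, i ≤ j → j ≤ m → B i ⊆ B j := by
    intro i j hij hjm
    induction j with
    | zero =>
      have h0 : i = 0 := by omega
      subst h0; exact subset_rfl
    | succ k ih =>
      rcases Nat.lt_or_ge i (k + 1) with h | h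
      · have h1 : B i ⊆ B k := ih (by omega) (by omega)
        rw [hBsucc k (by omega)]
        exact h1.trans Set.subset_union_left
      · have : i = k + 1 := by omega
        subst this; exact subset_rfl
  -- B j ⊆ A
  have hsubA : ∀ j ≤ m, B j ⊆ A := by
    intro j hj
    induction j with
    | zero => rw [hB0]; exact Set.empty_subset _
    | succ k ih =>
      rw [hBsucc k (by omega)]
      rintro x (hx | hx)
      · exact ih (by omega) hx
      · exact hx.1.1
  -- disjointness
  have hdisjB : ∀ n ≤ m, ∀ γ ∈ F, ∀ x, x ∈ B n → x ∈ γ • B n → False := by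
    intro n hn
    induction n with
    | zero => intro γ hγ x hx _; rw [hB0] at hx; exact hx
    | succ k ih =>
      intro γ hγ x hx hxγ
      rw [hBsucc k (by omega)] at hx hxγ
      obtain ⟨y, hy, hyx⟩ := hxγ
      rcases hx with hx | hx
      · rcases hy with hy | hy
        · exact ih (by omega) γ hγ x hx ⟨y, hy, hyx⟩
        · apply hy.2
          simp only [Set.mem_iUnion]
          refine ⟨γ⁻¹, hFsymm γ hγ, x, hx, ?_⟩
          simp only at hyx ⊢
          rw [← hyx, inv_smul_smul]
      · rcases hy with hy | hy
        · apply hx.2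
          simp only [Set.mem_iUnion]
          exact ⟨γ, hγ, y, hy, hyx⟩
        · have hmem : x ∈ Xp (k + 1) ∩ γ • Xp (k + 1) := ⟨hx.1.2, y, hy.1.2, hyx⟩
          rw [hXγ (k + 1) (by simp [Finset.mem_Icc]; omega) γ hγ] at hmem
          exact hmem
  refine ⟨hsubA m le_rfl, ?_, ?_⟩
  · intro γ hγ
    ext x
    simp only [Set.mem_inter_iff, Set.mem_empty_iff_false, iff_false, not_and]
    intro hx hxγ
    exact hdisjB m le_rfl γ hγ x hx hxγ
  · rintro x ⟨hxA, hxE⟩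
    have hxX : x ∈ ⋃ j ∈ Finset.Icc 1 m, Xp j := hcover ▸ Set.mem_univ x
    simp only [Set.mem_iUnion] at hxX
    obtain ⟨j, hj, hxj⟩ := hxX
    rw [Finset.mem_Icc] at hj
    obtain ⟨k, rfl⟩ : ∃ k, j = k + 1 := ⟨j - 1, by omega⟩
    have hxk : x ∉ B (k + 1) := fun h => hxE (hmono (k + 1) m (by omega) le_rfl h)
    rw [hBsucc k (by omega)] at hxk
    have hx2 : x ∉ (A ∩ Xp (k + 1)) \ ⋃ γ ∈ F, γ • B k := fun h => hxk (Or.inr h)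
    have hx3 : x ∈ ⋃ γ ∈ F, γ • B k := by
      by_contra h
      exact hx2 ⟨⟨hxA, hxj⟩, h⟩
    simp only [Set.mem_iUnion] at hx3
    obtain ⟨γ, hγ, y, hy, hyx⟩ := hx3
    exact ⟨γ, hγ, y, hmono k m (by omega) le_rfl hy, hyx⟩
end

section
/- In the setting of the previous greedy construction, additionally assume X is a topological space carrying a finite Borel measure μ, each X_j and A are clopen, and the action of each γ ∈ F is by homeomorphisms. Then E is clopen; and if μ(A) > 0 and j is the smallest index with μ(A ∩ X_j) > 0, then μ(E) ≥ μ(A ∩ X_j) > 0. -/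
open scoped Pointwise

/-- Topological/measure-theoretic continuation of the greedy construction from
Section 4: if moreover `X` is a topological space with a finite Borel measure `μ`
invariant under the (homeomorphic) action, and `A` and the pieces `X_j` are clopen,
then `E` is clopen; and if `μ(A) > 0` and `j` is the smallest index with
`μ(A ∩ X_j) > 0`, then `μ(E) ≥ μ(A ∩ X_j) > 0`. -/
theorem greedy_clopen_positive_measure
    {Γ : Type*} [Group Γ] {X : Type*} [MulAction Γ X] [TopologicalSpace X]
    [MeasurableSpace X] [BorelSpace X]
    (μ : MeasureTheory.Measure X) [MeasureTheory.IsFiniteMeasure μ]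
    (hcont : ∀ γ : Γ, Continuous fun x : X => γ • x)
    (hinv : ∀ (γ : Γ) (s : Set X), μ (γ • s) = μ s)
    (F : Finset Γ) (h1 : (1 : Γ) ∉ F) (hFsymm : ∀ γ ∈ F, γ⁻¹ ∈ F)
    (m : ℕ) (Xp : ℕ → Set X)
    (hXclopen : ∀ j ∈ Finset.Icc 1 m, IsClopen (Xp j))
    (hcover : (⋃ j ∈ Finset.Icc 1 m, Xp j) = Set.univ)
    (hdisj : ∀ j ∈ Finset.Icc 1 m, ∀ i ∈ Finset.Icc 1 m, i ≠ j → Disjoint (Xp i) (Xp j))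
    (hXγ : ∀ j ∈ Finset.Icc 1 m, ∀ γ ∈ F, Xp j ∩ γ • Xp j = ∅)
    (A : Set X) (hA : IsClopen A) (B : ℕ → Set X)
    (hB0 : B 0 = ∅)
    (hBsucc : ∀ j < m, B (j + 1) = B j ∪ ((A ∩ Xp (j + 1)) \ ⋃ γ ∈ F, γ • B j))
    (E : Set X) (hE : E = B m) :
    IsClopen E ∧
      (0 < μ A → ∀ j ∈ Finset.Icc 1 m, 0 < μ (A ∩ Xp j) →
        (∀ i ∈ Finset.Icc 1 m, i < j → μ (A ∩ Xp i) = 0) →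
        μ (A ∩ Xp j) ≤ μ E ∧ 0 < μ E) := by

  subst hE
  -- images of clopen sets under the action are clopen
  have hsmul_clopen : ∀ (γ : Γ) (s : Set X), IsClopen s → IsClopen (γ • s) := by
    intro γ s hs
    have h : γ • s = (fun x : X => γ⁻¹ • x) ⁻¹' s := by
      ext x
      simp [Set.mem_smul_set_iff_inv_smul_mem]
    rw [h]
    exact hs.preimage (hcont γ⁻¹)
  -- each B i is clopen
  have hBclopen : ∀ i ≤ m, IsClopen (B i) := by
    intro i
    induction i with
    | zero => intro _; rw [hB0]; exact isClopen_empty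
    | succ n ih =>
      intro hn
      have hnm : n < m := hn
      rw [hBsucc n hnm]
      have hcl := ih (le_of_lt hnm)
      have h2 : IsClopen (⋃ γ ∈ F, γ • B n) := by
        apply Set.Finite.isClopen_biUnion F.finite_toSet
        intro γ _
        exact hsmul_clopen γ _ hcl
      have hAX : IsClopen (A ∩ Xp (n + 1)) :=
        hA.inter (hXclopen (n + 1) (by simp [Finset.mem_Icc]; omega))
      exact hcl.union (hAX.diff h2)
  -- B is monotone
  have hmono : ∀ i j, i ≤ j → j ≤ m → B i ⊆ B j := by
    intro i j hij hjm
    induction j with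
    | zero => simp [Nat.le_zero.mp hij]
    | succ n ih =>
      rcases Nat.lt_or_ge i (n + 1) with h | h
      · have : B i ⊆ B n := ih (by omega) (by omega)
        rw [hBsucc n (by omega)]
        exact this.trans Set.subset_union_left
      · have : i = n + 1 := le_antisymm hij h
        subst this; exact Set.Subset.rfl
  -- B i is contained in the union of the pieces up to i
  have hBsub : ∀ i ≤ m, B i ⊆ ⋃ k ∈ Finset.Icc 1 i, (A ∩ Xp k) := by
    intro i
    induction i with
    | zero => intro _; simp [hB0]
    | succ n ih =>
      intro hn
      have hnm : n < m := hn
      rw [hBsucc n hnm]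
      apply Set.union_subset
      · refine (ih (le_of_lt hnm)).trans ?_
        apply Set.biUnion_subset_biUnion_left
        intro k hk
        have hk' : 1 ≤ k ∧ k ≤ n := Finset.mem_Icc.mp (Finset.mem_coe.mp hk)
        exact Finset.mem_coe.mpr (Finset.mem_Icc.mpr ⟨hk'.1, by omega⟩)
      · refine (Set.diff_subset).trans ?_
        exact Set.subset_biUnion_of_mem (u := fun k => A ∩ Xp k)
          (by simp [Finset.mem_Icc] : n + 1 ∈ Finset.Icc 1 (n + 1))
  constructor
  · exact hBclopen m le_rfl
  · intro _ j hj hjpos hmin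
    simp only [Finset.mem_Icc] at hj
    obtain ⟨hj1, hjm⟩ := hj
    obtain ⟨n, rfl⟩ : ∃ n, j = n + 1 := ⟨j - 1, by omega⟩
    have hnm : n < m := by omega
    -- μ (B n) = 0
    have hBn0 : μ (B n) = 0 := by
      have h0 : μ (⋃ k ∈ Finset.Icc 1 n, (A ∩ Xp k)) = 0 := by
        refine le_antisymm ?_ zero_le
        refine le_trans (MeasureTheory.measure_biUnion_finset_le _ _) ?_
        have : ∀ k ∈ Finset.Icc 1 n, μ (A ∩ Xp k) = 0 := by
          intro k hk
          simp only [Finset.mem_Icc] at hk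
          exact hmin k (by simp [Finset.mem_Icc]; omega) (by omega)
        simp [Finset.sum_congr rfl this]
      exact le_antisymm (le_trans (MeasureTheory.measure_mono (hBsub n (le_of_lt hnm))) h0.le) zero_le
    -- μ of the union of translates is 0
    have hN0 : μ (⋃ γ ∈ F, γ • B n) = 0 := by
      refine le_antisymm ?_ zero_le
      refine le_trans (MeasureTheory.measure_biUnion_finset_le _ _) ?_
      have : ∀ γ ∈ F, μ (γ • B n) = 0 := fun γ _ => by rw [hinv, hBn0]
      simp [Finset.sum_congr rfl this]
    have key : μ (A ∩ Xp (n + 1)) ≤ μ (B (n + 1)) := by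
      have hsub : A ∩ Xp (n + 1) ⊆ ((A ∩ Xp (n + 1)) \ ⋃ γ ∈ F, γ • B n) ∪ ⋃ γ ∈ F, γ • B n :=
        fun x hx => by by_cases h : x ∈ ⋃ γ ∈ F, γ • B n <;> simp [h, hx]
      calc μ (A ∩ Xp (n + 1))
          ≤ μ (((A ∩ Xp (n + 1)) \ ⋃ γ ∈ F, γ • B n) ∪ ⋃ γ ∈ F, γ • B n) :=
            MeasureTheory.measure_mono hsub
        _ ≤ μ ((A ∩ Xp (n + 1)) \ ⋃ γ ∈ F, γ • B n) + μ (⋃ γ ∈ F, γ • B n) :=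
            MeasureTheory.measure_union_le _ _
        _ = μ ((A ∩ Xp (n + 1)) \ ⋃ γ ∈ F, γ • B n) := by rw [hN0, add_zero]
        _ ≤ μ (B (n + 1)) := by
            rw [hBsucc n hnm]
            exact MeasureTheory.measure_mono Set.subset_union_right
    have hEle : μ (A ∩ Xp (n + 1)) ≤ μ (B m) :=
      key.trans (MeasureTheory.measure_mono (hmono (n + 1) m (by omega) le_rfl))
    exact ⟨hEle, lt_of_lt_of_le hjpos hEle⟩
end

section
/- Let σ be a simplex in the barycentric subdivision of a simplicial complex K, and suppose the vertices of K are colored such that the color of a barycenter depends only on the simplex of K it is the barycenter of. If two vertices of the subdivision lying in a common subdivision simplex correspond to simplices τ ⊆ τ' of K, and any such pair either has the same color or the colors come from 'different levels' of a fixed filtration of K by subcomplexes K_0 ⊆ K_1 ⊆ ⋯ ⊆ K_n = K (where the level of τ is the least i with τ ∈ K_i, and same-level distinct components get distinct colors), then every rainbow n-simplex of the subdivision (all n+1 vertex colors distinct) has exactly one vertex at each level 0, 1, …, n. -/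
/-- Combinatorial heart of Lemma 2.3.  A simplex of the barycentric subdivision of `K`
corresponds to a strictly increasing chain `v 0 ⊂ v 1 ⊂ ⋯ ⊂ v n` of simplices of `K`
(its vertices are their barycenters).  Vertices are colored by `col` (the color of a
barycenter depends only on the underlying simplex), and `lvl τ` is the filtration level
of `τ` (least `i` with `τ ∈ K_i`).  If any two simplices `τ ⊆ τ'` of `K` either have the
same color or lie at different levels, then every rainbow `n`-simplex of the subdivision
(all `n+1` vertex colors distinct) has exactly one vertex at each level `0, 1, …, n`. -/
theorem rainbow_simplex_levels
    {S : Type*} [PartialOrder S] {C : Type*} (n : ℕ)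
    (col : S → C) (lvl : S → Fin (n + 1))
    (hcolor : ∀ τ τ' : S, τ ≤ τ' → col τ = col τ' ∨ lvl τ ≠ lvl τ')
    (v : Fin (n + 1) → S) (hchain : StrictMono v)
    (hrainbow : Function.Injective (col ∘ v)) :
    Function.Bijective (lvl ∘ v) := by
  have hinj : Function.Injective (lvl ∘ v) := by
    intro i j hij
    rcases lt_trichotomy i j with h | h | h
    · rcases hcolor (v i) (v j) (hchain h).le with hc | hc
      · exact absurd (hrainbow hc) h.ne
      · exact absurd hij hc
    · exact h
    · rcases hcolor (v j) (v i) (hchain h).le with hc | hc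
      · exact absurd (hrainbow hc.symm) h.ne'
      · exact absurd hij.symm hc
  exact Finite.injective_iff_bijective.mp hinj
end
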